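/- Let r ≥ 1, 0<q<1, and let a = (a_1,…,a_{r+1}), b = (b_1,…,b_r), c = (c_1,…,c_r) be real parameters with a_j > 0 for all j, and b_i > c_i > 0 and b_i > 1 for i = 1,…,r. Then for all x with 0 < x < 1 the Turán type inequality [Φ(q^{a_1},…,q^{a_{r+1}}; q^{b_1},…,q^{b_r}; q, x)]² < Φ(q^{a_1},…,q^{a_{r+1}}; q^{b_1-c_1},…,q^{b_r-c_r}; q, x)·Φ(q^{a_1},…,q^{a_{r+1}}; q^{b_1+c_1},…,q^{b_r+c_r}; q, x) holds. -/

import Mathlib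

/-- The q-shifted factorial `(a;q)_n = ∏_{k=0}^{n-1} (1 - a q^k)`. -/
noncomputable def qPoch (q a : ℝ) (n : ℕ) : ℝ :=
  ∏ k ∈ Finset.range n, (1 - a * q ^ k)

/-- The basic (q-)hypergeometric series with `r+1` upper and `r` lower parameters. -/
noncomputable def qHyp (q : ℝ) (r : ℕ) (a : Fin (r + 1) → ℝ) (b : Fin r → ℝ) (x : ℝ) : ℝ :=
  ∑' n : ℕ,
    (∏ j, qPoch q (q ^ a j) n) / ((∏ j, qPoch q (q ^ b j) n) * qPoch q q n) * x ^ n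

open Finset Filter

section Aux

variable {q t : ℝ}

private lemma qFactor_pos (hq0 : 0 < q) (hq1 : q < 1) (ht0 : 0 ≤ t) (ht1 : t < 1) (k : ℕ) :
    0 < 1 - t * q ^ k := by
  have h1 : q ^ k ≤ 1 := pow_le_one₀ hq0.le hq1.le
  nlinarith [pow_pos hq0 k]

private lemma qPoch_pos (hq0 : 0 < q) (hq1 : q < 1) (ht0 : 0 ≤ t) (ht1 : t < 1) (n : ℕ) :
    0 < qPoch q t n :=
  Finset.prod_pos fun k _ => qFactor_pos hq0 hq1 ht0 ht1 k

private lemma qPoch_le_one (hq0 : 0 < q) (hq1 : q < 1) (ht0 : 0 ≤ t) (ht1 : t < 1) (n : ℕ) :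
    qPoch q t n ≤ 1 :=
  Finset.prod_le_one (fun k _ => (qFactor_pos hq0 hq1 ht0 ht1 k).le)
    (fun k _ => by nlinarith [mul_nonneg ht0 (pow_pos hq0 k).le])

/-- The n-th term of the q-hypergeometric series. -/
private noncomputable def qTerm (q : ℝ) (r : ℕ) (a : Fin (r + 1) → ℝ) (b : Fin r → ℝ)
    (x : ℝ) (n : ℕ) : ℝ :=
  (∏ j, qPoch q (q ^ a j) n) / ((∏ j, qPoch q (q ^ b j) n) * qPoch q q n) * x ^ n

private lemma qHyp_eq_tsum (r : ℕ) (a : Fin (r + 1) → ℝ) (b : Fin r → ℝ) (x : ℝ) :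
    qHyp q r a b x = ∑' n, qTerm q r a b x n := rfl

private lemma rpow_lt_one' (hq0 : 0 < q) (hq1 : q < 1) {s : ℝ} (hs : 0 < s) : q ^ s < 1 :=
  Real.rpow_lt_one hq0.le hq1 hs

private lemma qTerm_pos {r : ℕ} {a : Fin (r + 1) → ℝ} {b : Fin r → ℝ} {x : ℝ}
    (hq0 : 0 < q) (hq1 : q < 1) (ha : ∀ j, 0 < a j) (hb : ∀ i, 0 < b i) (hx0 : 0 < x) (n : ℕ) :
    0 < qTerm q r a b x n := by
  have hP : 0 < ∏ j, qPoch q (q ^ a j) n :=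
    Finset.prod_pos fun j _ =>
      qPoch_pos hq0 hq1 (Real.rpow_pos_of_pos hq0 _).le (rpow_lt_one' hq0 hq1 (ha j)) n
  have hQ : 0 < ∏ j, qPoch q (q ^ b j) n :=
    Finset.prod_pos fun j _ =>
      qPoch_pos hq0 hq1 (Real.rpow_pos_of_pos hq0 _).le (rpow_lt_one' hq0 hq1 (hb j)) n
  have hR : 0 < qPoch q q n := qPoch_pos hq0 hq1 hq0.le hq1 n
  exact mul_pos (div_pos hP (mul_pos hQ hR)) (pow_pos hx0 n)

private lemma summable_qTerm {r : ℕ} {a : Fin (r + 1) → ℝ} {b : Fin r → ℝ} {x : ℝ}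
    (hq0 : 0 < q) (hq1 : q < 1) (ha : ∀ j, 0 < a j) (hb : ∀ i, 0 < b i)
    (hx0 : 0 < x) (hx1 : x < 1) :
    Summable (qTerm q r a b x) := by
  set D : ℕ → ℝ := fun n => (∏ j, (1 - q ^ b j * q ^ n)) * (1 - q * q ^ n) with hD
  have hDt : Tendsto D atTop (nhds 1) := by
    have hqn : Tendsto (fun n : ℕ => q ^ n) atTop (nhds (0 : ℝ)) :=
      tendsto_pow_atTop_nhds_zero_of_lt_one hq0.le hq1
    have hcont : Continuous fun y : ℝ => (∏ j, (1 - q ^ b j * y)) * (1 - q * y) :=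
      (continuous_finset_prod _ fun j _ =>
        continuous_const.sub (continuous_const.mul continuous_id)).mul
        (continuous_const.sub (continuous_const.mul continuous_id))
    have := (hcont.tendsto 0).comp hqn
    simpa [hD, Function.comp_def] using this
  set r' : ℝ := (1 + x) / 2 with hr'
  have hr'pos : 0 < r' := by positivity
  have hr'1 : r' < 1 := by rw [hr']; linarith
  have hxr : x / r' < 1 := by
    rw [div_lt_one hr'pos, hr']; linarith
  have hev : ∀ᶠ n in atTop, x / r' < D n := hDt.eventually (eventually_gt_nhds hxr)
  apply summable_of_ratio_norm_eventually_le hr'1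
  filter_upwards [hev] with n hDn
  have hDpos : 0 < D n := lt_trans (by positivity) hDn
  have hxD : x < r' * D n := by
    rw [div_lt_iff₀ hr'pos] at hDn; linarith [hDn]
  set N : ℝ := ∏ j, (1 - q ^ a j * q ^ n) with hN
  have hN0 : 0 < N :=
    Finset.prod_pos fun j _ =>
      qFactor_pos hq0 hq1 (Real.rpow_pos_of_pos hq0 _).le (rpow_lt_one' hq0 hq1 (ha j)) n
  have hN1 : N ≤ 1 :=
    Finset.prod_le_one
      (fun j _ => (qFactor_pos hq0 hq1 (Real.rpow_pos_of_pos hq0 _).le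
        (rpow_lt_one' hq0 hq1 (ha j)) n).le)
      (fun j _ => by
        nlinarith [mul_nonneg (Real.rpow_pos_of_pos hq0 (a j)).le (pow_pos hq0 n).le])
  have hsucc : qTerm q r a b x (n + 1) = qTerm q r a b x n * (x * N / D n) := by
    have hQn : (0:ℝ) < ∏ j, qPoch q (q ^ b j) n :=
      Finset.prod_pos fun j _ =>
        qPoch_pos hq0 hq1 (Real.rpow_pos_of_pos hq0 _).le (rpow_lt_one' hq0 hq1 (hb j)) n
    have hRn : 0 < qPoch q q n := qPoch_pos hq0 hq1 hq0.le hq1 n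
    have hM : (0:ℝ) < ∏ j, (1 - q ^ b j * q ^ n) :=
      Finset.prod_pos fun j _ =>
        qFactor_pos hq0 hq1 (Real.rpow_pos_of_pos hq0 _).le (rpow_lt_one' hq0 hq1 (hb j)) n
    have h1q : 0 < 1 - q * q ^ n := qFactor_pos hq0 hq1 hq0.le hq1 n
    have ePoch : ∀ t : ℝ, qPoch q t (n + 1) = qPoch q t n * (1 - t * q ^ n) := fun t =>
      Finset.prod_range_succ _ n
    simp only [qTerm, ePoch, Finset.prod_mul_distrib, pow_succ, hD, hN]
    field_simp
    simp only [mul_comm (q ^ n)]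
  rw [hsucc]
  have hterm : 0 < qTerm q r a b x n := qTerm_pos hq0 hq1 ha hb hx0 n
  have hfrac : x * N / D n ≤ r' := by
    rw [div_le_iff₀ hDpos]
    nlinarith
  have hfrac0 : 0 ≤ x * N / D n := by positivity
  have hfracpos : 0 < x * N / D n := by positivity
  rw [Real.norm_eq_abs, Real.norm_eq_abs, abs_of_pos (mul_pos hterm hfracpos),
    abs_of_pos hterm]
  calc qTerm q r a b x n * (x * N / D n) ≤ qTerm q r a b x n * r' :=
        mul_le_mul_of_nonneg_left hfrac hterm.le
    _ = r' * qTerm q r a b x n := mul_comm _ _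

/-- Key factor inequality: `(1 - q^{b-c} t)(1 - q^{b+c} t) < (1 - q^b t)²`. -/
private lemma factor_sq_lt (hq0 : 0 < q) (hq1 : q < 1) {b c : ℝ} (hc : 0 < c) (k : ℕ) :
    (1 - q ^ (b - c) * q ^ k) * (1 - q ^ (b + c) * q ^ k) < (1 - q ^ b * q ^ k) ^ 2 := by
  set A := q ^ b with hA
  set B := q ^ (b - c) with hB
  set C := q ^ (b + c) with hC
  have hApos : 0 < A := Real.rpow_pos_of_pos hq0 _
  have hBpos : 0 < B := Real.rpow_pos_of_pos hq0 _
  have hCpos : 0 < C := Real.rpow_pos_of_pos hq0 _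
  have hprod : B * C = A * A := by
    rw [hA, hB, hC, ← Real.rpow_add hq0, ← Real.rpow_add hq0]; ring_nf
  have hCB : C < B := Real.rpow_lt_rpow_of_exponent_gt hq0 hq1 (by linarith)
  have hBC2 : 2 * A < B + C := by
    nlinarith [pow_pos (sub_pos.2 hCB) 2, sq_nonneg (B - C)]
  have ht : 0 < q ^ k := pow_pos hq0 k
  have e : (1 - A * q ^ k) ^ 2 - (1 - B * q ^ k) * (1 - C * q ^ k) =
      (B + C - 2 * A) * q ^ k := by
    linear_combination (-(q ^ k : ℝ) ^ 2) * hprod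
  have hpos : 0 < (B + C - 2 * A) * q ^ k := mul_pos (by linarith) ht
  linarith

private lemma qPoch_sq_lt (hq0 : 0 < q) (hq1 : q < 1) {b c : ℝ} (hc : 0 < c) (hbc : c < b)
    {n : ℕ} (hn : 1 ≤ n) :
    qPoch q (q ^ (b - c)) n * qPoch q (q ^ (b + c)) n < qPoch q (q ^ b) n ^ 2 := by
  have hBfac : ∀ k : ℕ, 0 < 1 - q ^ (b - c) * q ^ k := fun k =>
    qFactor_pos hq0 hq1 (Real.rpow_pos_of_pos hq0 _).le (rpow_lt_one' hq0 hq1 (by linarith)) k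
  have hCfac : ∀ k : ℕ, 0 < 1 - q ^ (b + c) * q ^ k := fun k =>
    qFactor_pos hq0 hq1 (Real.rpow_pos_of_pos hq0 _).le (rpow_lt_one' hq0 hq1 (by linarith)) k
  rw [qPoch, qPoch, qPoch, ← Finset.prod_mul_distrib, ← Finset.prod_pow]
  exact Finset.prod_lt_prod_of_nonempty
    (fun k _ => mul_pos (hBfac k) (hCfac k))
    (fun k _ => factor_sq_lt hq0 hq1 hc k)
    (Finset.nonempty_range_iff.2 (by omega))

private lemma qPoch_sq_le (hq0 : 0 < q) (hq1 : q < 1) {b c : ℝ} (hc : 0 < c) (hbc : c < b)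
    (n : ℕ) :
    qPoch q (q ^ (b - c)) n * qPoch q (q ^ (b + c)) n ≤ qPoch q (q ^ b) n ^ 2 := by
  rcases Nat.eq_zero_or_pos n with h | h
  · subst h; simp [qPoch]
  · exact (qPoch_sq_lt hq0 hq1 hc hbc h).le

/-- Cauchy–Schwarz for nonnegative summable series. -/
private lemma tsum_sqrt_mul_sq_le {u v : ℕ → ℝ} (hu : Summable u) (hv : Summable v)
    (hu0 : ∀ n, 0 ≤ u n) (hv0 : ∀ n, 0 ≤ v n) :
    (∑' n, Real.sqrt (u n * v n)) ^ 2 ≤ (∑' n, u n) * (∑' n, v n) := by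
  have hsle : ∀ n, Real.sqrt (u n * v n) ≤ (u n + v n) / 2 := by
    intro n
    have h1 : Real.sqrt (u n * v n) = Real.sqrt (u n) * Real.sqrt (v n) :=
      Real.sqrt_mul (hu0 n) _
    nlinarith [sq_nonneg (Real.sqrt (u n) - Real.sqrt (v n)), Real.sq_sqrt (hu0 n),
      Real.sq_sqrt (hv0 n)]
  have hs : Summable fun n => Real.sqrt (u n * v n) :=
    Summable.of_nonneg_of_le (fun n => Real.sqrt_nonneg _) hsle ((hu.add hv).div_const 2)
  have hUnn : 0 ≤ ∑' n, u n := tsum_nonneg hu0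
  have hVnn : 0 ≤ ∑' n, v n := tsum_nonneg hv0
  have key : ∑' n, Real.sqrt (u n * v n) ≤ Real.sqrt ((∑' n, u n) * (∑' n, v n)) := by
    apply hs.tsum_le_of_sum_le
    intro s
    have hcs : (∑ n ∈ s, Real.sqrt (u n) * Real.sqrt (v n)) ^ 2 ≤
        (∑ n ∈ s, Real.sqrt (u n) ^ 2) * ∑ n ∈ s, Real.sqrt (v n) ^ 2 :=
      Finset.sum_mul_sq_le_sq_mul_sq s _ _
    have hequ : ∀ n, Real.sqrt (u n) ^ 2 = u n := fun n => Real.sq_sqrt (hu0 n)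
    have heqv : ∀ n, Real.sqrt (v n) ^ 2 = v n := fun n => Real.sq_sqrt (hv0 n)
    rw [Finset.sum_congr rfl fun n _ => hequ n, Finset.sum_congr rfl fun n _ => heqv n] at hcs
    have hle : (∑ n ∈ s, u n) * (∑ n ∈ s, v n) ≤ (∑' n, u n) * (∑' n, v n) := by
      apply mul_le_mul (hu.sum_le_tsum s (fun n _ => hu0 n)) (hv.sum_le_tsum s (fun n _ => hv0 n))
        (Finset.sum_nonneg fun n _ => hv0 n) hUnn
    rw [Real.le_sqrt (Finset.sum_nonneg fun n _ => Real.sqrt_nonneg _) (by positivity)]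
    calc (∑ n ∈ s, Real.sqrt (u n * v n)) ^ 2
        = (∑ n ∈ s, Real.sqrt (u n) * Real.sqrt (v n)) ^ 2 := by
          congr 1; exact Finset.sum_congr rfl fun n _ => Real.sqrt_mul (hu0 n) _
      _ ≤ (∑ n ∈ s, u n) * ∑ n ∈ s, v n := hcs
      _ ≤ _ := hle
  calc (∑' n, Real.sqrt (u n * v n)) ^ 2
      ≤ Real.sqrt ((∑' n, u n) * (∑' n, v n)) ^ 2 := by
        apply pow_le_pow_left₀ (tsum_nonneg fun n => Real.sqrt_nonneg _) key
    _ = (∑' n, u n) * (∑' n, v n) := Real.sq_sqrt (by positivity)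

end Aux

theorem statement_3 (r : ℕ) (hr : 1 ≤ r) (q : ℝ) (hq0 : 0 < q) (hq1 : q < 1)
    (a : Fin (r + 1) → ℝ) (b c : Fin r → ℝ)
    (ha : ∀ j, 0 < a j) (hbc : ∀ i, b i > c i) (hc : ∀ i, 0 < c i) (hb1 : ∀ i, b i > 1)
    (x : ℝ) (hx0 : 0 < x) (hx1 : x < 1) :
    (qHyp q r a b x) ^ 2 <
      qHyp q r a (fun i => b i - c i) x * qHyp q r a (fun i => b i + c i) x := by
  have hbpos : ∀ i, 0 < b i := fun i => lt_trans (hc i) (hbc i)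
  have hbm : ∀ i, 0 < b i - c i := fun i => sub_pos.2 (hbc i)
  have hbp : ∀ i, (0:ℝ) < b i + c i := fun i => by linarith [hbpos i, hc i]
  set w := qTerm q r a b x with hw
  set u := qTerm q r a (fun i => b i - c i) x with hu
  set v := qTerm q r a (fun i => b i + c i) x with hv
  have hwpos : ∀ n, 0 < w n := qTerm_pos hq0 hq1 ha hbpos hx0
  have hupos : ∀ n, 0 < u n := qTerm_pos hq0 hq1 ha hbm hx0
  have hvpos : ∀ n, 0 < v n := qTerm_pos hq0 hq1 ha hbp hx0
  have hsumu : Summable u := summable_qTerm hq0 hq1 ha hbm hx0 hx1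
  have hsumv : Summable v := summable_qTerm hq0 hq1 ha hbp hx0 hx1
  have hNe : Nonempty (Fin r) := ⟨⟨0, hr⟩⟩
  -- key termwise bound
  have hkey_le : ∀ n, w n ^ 2 ≤ u n * v n := by
    intro n
    have hP : 0 < ∏ j, qPoch q (q ^ a j) n :=
      Finset.prod_pos fun j _ =>
        qPoch_pos hq0 hq1 (Real.rpow_pos_of_pos hq0 _).le (rpow_lt_one' hq0 hq1 (ha j)) n
    have hQb : 0 < ∏ j, qPoch q (q ^ b j) n :=
      Finset.prod_pos fun j _ =>
        qPoch_pos hq0 hq1 (Real.rpow_pos_of_pos hq0 _).le (rpow_lt_one' hq0 hq1 (hbpos j)) n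
    have hQm : 0 < ∏ j, qPoch q (q ^ (b j - c j)) n :=
      Finset.prod_pos fun j _ =>
        qPoch_pos hq0 hq1 (Real.rpow_pos_of_pos hq0 _).le (rpow_lt_one' hq0 hq1 (hbm j)) n
    have hQp : 0 < ∏ j, qPoch q (q ^ (b j + c j)) n :=
      Finset.prod_pos fun j _ =>
        qPoch_pos hq0 hq1 (Real.rpow_pos_of_pos hq0 _).le (rpow_lt_one' hq0 hq1 (hbp j)) n
    have hR : 0 < qPoch q q n := qPoch_pos hq0 hq1 hq0.le hq1 n
    have hprodle : (∏ j, qPoch q (q ^ (b j - c j)) n) * (∏ j, qPoch q (q ^ (b j + c j)) n) ≤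
        (∏ j, qPoch q (q ^ b j) n) ^ 2 := by
      rw [← Finset.prod_mul_distrib, ← Finset.prod_pow]
      apply Finset.prod_le_prod
      · intro i _
        exact (mul_pos
          (qPoch_pos hq0 hq1 (Real.rpow_pos_of_pos hq0 _).le (rpow_lt_one' hq0 hq1 (hbm i)) n)
          (qPoch_pos hq0 hq1 (Real.rpow_pos_of_pos hq0 _).le (rpow_lt_one' hq0 hq1 (hbp i)) n)).le
      · intro i _
        exact qPoch_sq_le hq0 hq1 (hc i) (hbc i) n
    have e1 : w n ^ 2 = (∏ j, qPoch q (q ^ a j) n) ^ 2 * (x ^ n) ^ 2 /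
        ((∏ j, qPoch q (q ^ b j) n) ^ 2 * qPoch q q n ^ 2) := by
      rw [hw]; simp only [qTerm]; ring
    have e2 : u n * v n = (∏ j, qPoch q (q ^ a j) n) ^ 2 * (x ^ n) ^ 2 /
        ((∏ j, qPoch q (q ^ (b j - c j)) n) * (∏ j, qPoch q (q ^ (b j + c j)) n) *
          qPoch q q n ^ 2) := by
      rw [hu, hv]; simp only [qTerm]; ring
    rw [e1, e2]
    exact div_le_div_of_nonneg_left (by positivity)
      (mul_pos (mul_pos hQm hQp) (pow_pos hR 2))
      (mul_le_mul_of_nonneg_right hprodle (pow_pos hR 2).le)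
  have hwle : ∀ n, w n ≤ Real.sqrt (u n * v n) := fun n =>
    Real.le_sqrt (hwpos n).le (mul_pos (hupos n) (hvpos n)).le |>.2 (hkey_le n)
  -- strict at n = 1
  have hkey_lt : w 1 ^ 2 < u 1 * v 1 := by
    have hP : 0 < ∏ j, qPoch q (q ^ a j) 1 :=
      Finset.prod_pos fun j _ =>
        qPoch_pos hq0 hq1 (Real.rpow_pos_of_pos hq0 _).le (rpow_lt_one' hq0 hq1 (ha j)) 1
    have hQm : 0 < ∏ j, qPoch q (q ^ (b j - c j)) 1 :=
      Finset.prod_pos fun j _ =>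
        qPoch_pos hq0 hq1 (Real.rpow_pos_of_pos hq0 _).le (rpow_lt_one' hq0 hq1 (hbm j)) 1
    have hQp : 0 < ∏ j, qPoch q (q ^ (b j + c j)) 1 :=
      Finset.prod_pos fun j _ =>
        qPoch_pos hq0 hq1 (Real.rpow_pos_of_pos hq0 _).le (rpow_lt_one' hq0 hq1 (hbp j)) 1
    have hR : 0 < qPoch q q 1 := qPoch_pos hq0 hq1 hq0.le hq1 1
    have hprodlt : (∏ j, qPoch q (q ^ (b j - c j)) 1) * (∏ j, qPoch q (q ^ (b j + c j)) 1) <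
        (∏ j, qPoch q (q ^ b j) 1) ^ 2 := by
      rw [← Finset.prod_mul_distrib, ← Finset.prod_pow]
      apply Finset.prod_lt_prod_of_nonempty
      · intro i _
        exact mul_pos
          (qPoch_pos hq0 hq1 (Real.rpow_pos_of_pos hq0 _).le (rpow_lt_one' hq0 hq1 (hbm i)) 1)
          (qPoch_pos hq0 hq1 (Real.rpow_pos_of_pos hq0 _).le (rpow_lt_one' hq0 hq1 (hbp i)) 1)
      · intro i _
        exact qPoch_sq_lt hq0 hq1 (hc i) (hbc i) le_rfl
      · exact Finset.univ_nonempty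
    have e1 : w 1 ^ 2 = (∏ j, qPoch q (q ^ a j) 1) ^ 2 * (x ^ 1) ^ 2 /
        ((∏ j, qPoch q (q ^ b j) 1) ^ 2 * qPoch q q 1 ^ 2) := by
      rw [hw]; simp only [qTerm]; ring
    have e2 : u 1 * v 1 = (∏ j, qPoch q (q ^ a j) 1) ^ 2 * (x ^ 1) ^ 2 /
        ((∏ j, qPoch q (q ^ (b j - c j)) 1) * (∏ j, qPoch q (q ^ (b j + c j)) 1) *
          qPoch q q 1 ^ 2) := by
      rw [hu, hv]; simp only [qTerm]; ring
    rw [e1, e2]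
    exact div_lt_div_of_pos_left (by positivity)
      (mul_pos (mul_pos hQm hQp) (pow_pos hR 2))
      (mul_lt_mul_of_pos_right hprodlt (pow_pos hR 2))
  have hwlt : w 1 < Real.sqrt (u 1 * v 1) :=
    (Real.lt_sqrt (hwpos 1).le).2 hkey_lt
  -- summability of sqrt(uv) and of w
  have hsle : ∀ n, Real.sqrt (u n * v n) ≤ (u n + v n) / 2 := by
    intro n
    have h1 : Real.sqrt (u n * v n) = Real.sqrt (u n) * Real.sqrt (v n) :=
      Real.sqrt_mul (hupos n).le _
    nlinarith [sq_nonneg (Real.sqrt (u n) - Real.sqrt (v n)), Real.sq_sqrt (hupos n).le,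
      Real.sq_sqrt (hvpos n).le]
  have hsums : Summable fun n => Real.sqrt (u n * v n) :=
    Summable.of_nonneg_of_le (fun n => Real.sqrt_nonneg _) hsle ((hsumu.add hsumv).div_const 2)
  have hsumw : Summable w :=
    Summable.of_nonneg_of_le (fun n => (hwpos n).le) hwle hsums
  -- assemble
  have h1 : ∑' n, w n < ∑' n, Real.sqrt (u n * v n) :=
    Summable.tsum_lt_tsum hwle hwlt hsumw hsums
  have h2 : (∑' n, Real.sqrt (u n * v n)) ^ 2 ≤ (∑' n, u n) * (∑' n, v n) :=
    tsum_sqrt_mul_sq_le hsumu hsumv (fun n => (hupos n).le) (fun n => (hvpos n).le)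
  have h0 : 0 ≤ ∑' n, w n := tsum_nonneg fun n => (hwpos n).le
  have h3 : (∑' n, w n) ^ 2 < (∑' n, Real.sqrt (u n * v n)) ^ 2 :=
    pow_lt_pow_left₀ h1 h0 two_ne_zero
  calc (qHyp q r a b x) ^ 2 = (∑' n, w n) ^ 2 := by rw [qHyp_eq_tsum]
    _ < (∑' n, u n) * (∑' n, v n) := lt_of_lt_of_le h3 h2
    _ = _ := by rw [qHyp_eq_tsum, qHyp_eq_tsum]
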